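/- Let G be a finite abelian group of order n, D(G) its generalized dihedral group (assumed non-abelian), \Gamma the commuting graph of D(G), and z = |{g \in G : g^2 = e}|. If z \ge 2, then the metric dimension of \Gamma equals 2n - n/z - 2. -/

import Mathlib

/-- The generalized dihedral group `D(G) = G ⋊ C₂`, with `⟨g, false⟩`
representing `(g, 1)` and `⟨g, true⟩` representing `(g, -1)`.
Multiplication is `(g₁, c₁)(g₂, c₂) = (g₁ g₂^{c₁}, c₁ c₂)`, i.e. `-1` acts by inversion. -/
@[ext]
structure GenDihedral (G : Type) where
  g : G
  b : Bool
  deriving DecidableEq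

namespace GenDihedral

variable {G : Type} [CommGroup G]

instance : Mul (GenDihedral G) :=
  ⟨fun a c => ⟨a.g * (if a.b then c.g⁻¹ else c.g), xor a.b c.b⟩⟩

instance : One (GenDihedral G) := ⟨⟨1, false⟩⟩

instance : Inv (GenDihedral G) := ⟨fun a => ⟨if a.b then a.g else a.g⁻¹, a.b⟩⟩

theorem mul_def (a c : GenDihedral G) :
    a * c = ⟨a.g * (if a.b then c.g⁻¹ else c.g), xor a.b c.b⟩ := rfl

theorem one_def : (1 : GenDihedral G) = ⟨1, false⟩ := rfl

theorem inv_def (a : GenDihedral G) : a⁻¹ = ⟨if a.b then a.g else a.g⁻¹, a.b⟩ := rfl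

instance : Group (GenDihedral G) where
  mul_assoc a c d := by
    obtain ⟨g₁, b₁⟩ := a; obtain ⟨g₂, b₂⟩ := c; obtain ⟨g₃, b₃⟩ := d
    cases b₁ <;> cases b₂ <;> cases b₃ <;>
      simp [mul_def, mul_assoc, mul_comm, mul_left_comm, mul_inv, inv_inv]
  one_mul a := by obtain ⟨g, b⟩ := a; cases b <;> simp [mul_def, one_def]
  mul_one a := by obtain ⟨g, b⟩ := a; cases b <;> simp [mul_def, one_def]
  inv_mul_cancel a := by
    obtain ⟨g, b⟩ := a; cases b <;> simp [mul_def, one_def, inv_def]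

instance [Fintype G] : Fintype (GenDihedral G) :=
  Fintype.ofEquiv (G × Bool)
    ⟨fun p => ⟨p.1, p.2⟩, fun x => (x.g, x.b), fun _ => rfl, fun _ => rfl⟩

instance [DecidableEq G] (a c : GenDihedral G) : Decidable (Commute a c) :=
  decidable_of_iff (a * c = c * a) Iff.rfl

end GenDihedral

namespace GenDihedral

/-- The commuting graph of `D(G)`: vertices are the elements of `D(G)`, and two
distinct vertices are adjacent iff they commute. -/
def commGraph (G : Type) [CommGroup G] : SimpleGraph (GenDihedral G) where
  Adj u v := u ≠ v ∧ u * v = v * u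
  symm := ⟨fun _ _ h => ⟨h.1.symm, h.2.symm⟩⟩
  loopless := ⟨fun _ h => h.1 rfl⟩

instance {G : Type} [CommGroup G] [DecidableEq G] : DecidableRel (commGraph G).Adj :=
  fun _ _ => instDecidableAnd

variable {G : Type} [CommGroup G]

lemma adj_ff {g h : G} : (commGraph G).Adj ⟨g, false⟩ ⟨h, false⟩ ↔ g ≠ h := by
  constructor
  · rintro ⟨hne, -⟩ rfl; exact hne rfl
  · intro hgh
    exact ⟨by simp [GenDihedral.ext_iff, hgh], by simp [mul_def, mul_comm]⟩

lemma adj_ft {g h : G} : (commGraph G).Adj ⟨g, false⟩ ⟨h, true⟩ ↔ g ^ 2 = 1 := by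
  have key : (g * h = h * g⁻¹) ↔ g ^ 2 = 1 := by
    rw [mul_comm g h, mul_right_inj, ← mul_eq_one_iff_eq_inv, ← pow_two]
  constructor
  · rintro ⟨-, hc⟩
    simp only [mul_def, GenDihedral.mk.injEq] at hc
    exact key.mp (by simpa using hc.1)
  · intro hg
    refine ⟨by simp [GenDihedral.ext_iff], ?_⟩
    simp only [mul_def]
    simp [GenDihedral.ext_iff, key.mpr hg]

lemma adj_tf {g h : G} : (commGraph G).Adj ⟨g, true⟩ ⟨h, false⟩ ↔ h ^ 2 = 1 := by
  have key : (g * h⁻¹ = h * g) ↔ h ^ 2 = 1 := by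
    rw [mul_comm h g, mul_right_inj, eq_comm, ← mul_eq_one_iff_eq_inv, ← pow_two]
  constructor
  · rintro ⟨-, hc⟩
    simp only [mul_def, GenDihedral.mk.injEq] at hc
    exact key.mp (by simpa using hc.1)
  · intro hg
    refine ⟨by simp [GenDihedral.ext_iff], ?_⟩
    simp only [mul_def]
    simp [GenDihedral.ext_iff, key.mpr hg]

lemma adj_tt {g h : G} :
    (commGraph G).Adj ⟨g, true⟩ ⟨h, true⟩ ↔ g ≠ h ∧ g ^ 2 = h ^ 2 := by
  have key : (g * h⁻¹ = h * g⁻¹) ↔ g ^ 2 = h ^ 2 := by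
    constructor
    · intro hc
      have := congrArg (fun x => x * (h * g)) hc
      simp only [pow_two]
      simpa [mul_assoc, mul_comm, mul_left_comm] using this
    · intro hc
      have h2 : g * g = h * h := by simpa [pow_two] using hc
      have := congrArg (fun x => x * (h⁻¹ * g⁻¹)) h2
      simpa [mul_assoc, mul_comm, mul_left_comm] using this
  constructor
  · rintro ⟨hne, hc⟩
    simp only [mul_def, GenDihedral.mk.injEq] at hc
    refine ⟨fun hgh => hne (by simp [GenDihedral.ext_iff, hgh]), key.mp (by simpa using hc.1)⟩
  · rintro ⟨hne, hsq⟩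
    refine ⟨by simp [GenDihedral.ext_iff, hne], ?_⟩
    simp only [mul_def]
    simp [GenDihedral.ext_iff, key.mpr hsq]

lemma adj_one {v : GenDihedral G} (h : v ≠ 1) : (commGraph G).Adj 1 v :=
  ⟨Ne.symm h, by rw [one_mul, mul_one]⟩

lemma dist_formula [DecidableEq G] (u v : GenDihedral G) :
    (commGraph G).dist u v =
      if u = v then 0 else if (commGraph G).Adj u v then 1 else 2 := by
  split_ifs with h1 h2
  · subst h1; exact SimpleGraph.dist_self
  · exact SimpleGraph.dist_eq_one_iff_adj.mpr h2
  · have hu : u ≠ 1 := by rintro rfl; exact h2 (adj_one (Ne.symm h1))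
    have hv : v ≠ 1 := by rintro rfl; exact h2 ((adj_one hu).symm)
    have w : (commGraph G).Walk u v := .cons ((adj_one hu).symm) (.cons (adj_one hv) .nil)
    have hle : (commGraph G).dist u v ≤ 2 := by
      simpa using SimpleGraph.dist_le (.cons ((adj_one hu).symm) (.cons (adj_one hv) .nil))
    have h0 : (commGraph G).dist u v ≠ 0 := by
      intro hh
      rcases SimpleGraph.dist_eq_zero_iff_eq_or_not_reachable.mp hh with h | h
      · exact h1 h
      · exact h ⟨w⟩
    have hne1 : (commGraph G).dist u v ≠ 1 := fun hh =>
      h2 (SimpleGraph.dist_eq_one_iff_adj.mp hh)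
    omega

end GenDihedral

namespace GenDihedral
variable {G : Type} [CommGroup G]

def sqSetoid (G : Type) [CommGroup G] : Setoid G :=
  ⟨fun g h => g ^ 2 = h ^ 2, ⟨fun _ => rfl, Eq.symm, Eq.trans⟩⟩

noncomputable def rep (g : G) : G := (Quotient.mk (sqSetoid G) g).out

lemma rep_sq (g : G) : rep g ^ 2 = g ^ 2 :=
  Quotient.exact (Quotient.out_eq (Quotient.mk (sqSetoid G) g))

lemma rep_eq_of_sq {g h : G} (hs : g ^ 2 = h ^ 2) : rep g = rep h := by
  unfold rep
  rw [Quotient.sound (hs : (sqSetoid G).r g h)]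

lemma rep_rep (g : G) : rep (rep g) = rep g := rep_eq_of_sq (rep_sq g)

lemma sq_eq_of_rep {g h : G} (hr : rep g = rep h) : g ^ 2 = h ^ 2 := by
  rw [← rep_sq g, hr, rep_sq]

variable [Fintype G] [DecidableEq G]

lemma fiber_eq (r : G) :
    Finset.univ.filter (fun g : G => g ^ 2 = r ^ 2) =
      (Finset.univ.filter fun t : G => t ^ 2 = 1).image (fun t => r * t) := by
  ext h
  simp only [Finset.mem_filter, Finset.mem_image, Finset.mem_univ, true_and]
  constructor
  · intro hh
    refine ⟨r⁻¹ * h, ?_, by rw [← mul_assoc, mul_inv_cancel, one_mul]⟩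
    rw [mul_pow, inv_pow, hh, inv_mul_cancel]
  · rintro ⟨t, ht, rfl⟩
    rw [mul_pow, ht, mul_one]

lemma card_fiber (r : G) :
    (Finset.univ.filter (fun g : G => g ^ 2 = r ^ 2)).card =
      (Finset.univ.filter fun t : G => t ^ 2 = 1).card := by
  rw [fiber_eq, Finset.card_image_of_injective _ (mul_right_injective r)]

lemma card_univ_eq :
    Fintype.card G =
      (Finset.univ.filter fun g : G => rep g = g).card *
        (Finset.univ.filter fun t : G => t ^ 2 = 1).card := by
  classical
  rw [← Finset.card_univ, Finset.card_eq_sum_card_fiberwise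
      (f := rep) (t := Finset.univ.filter fun g : G => rep g = g)
      (fun g _ => Finset.mem_filter.mpr ⟨Finset.mem_univ _, rep_rep g⟩)]
  have h1 : ∀ r ∈ (Finset.univ.filter fun g : G => rep g = g),
      (Finset.univ.filter fun g : G => rep g = r).card
        = (Finset.univ.filter fun t : G => t ^ 2 = 1).card := by
    intro r hr
    have hrr : rep r = r := (Finset.mem_filter.mp hr).2
    rw [← card_fiber r]
    congr 1
    ext g
    simp only [Finset.mem_filter, Finset.mem_univ, true_and]
    constructor
    · intro h
      rw [← rep_sq g, h]
    · intro h
      rw [rep_eq_of_sq h, hrr]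
  rw [Finset.sum_congr rfl h1, Finset.sum_const, smul_eq_mul]

lemma card_gd : Fintype.card (GenDihedral G) = 2 * Fintype.card G := by
  rw [← Fintype.card_congr
    (⟨fun p => ⟨p.1, p.2⟩, fun x => (x.g, x.b), fun _ => rfl, fun _ => rfl⟩ :
      G × Bool ≃ GenDihedral G)]
  simp [Fintype.card_prod, mul_comm]

lemma twin_dist {u v w : GenDihedral G} (hb : u.b = v.b)
    (h1 : u.g ^ 2 = 1 ↔ v.g ^ 2 = 1) (h2 : u.b = true → u.g ^ 2 = v.g ^ 2)
    (hwu : w ≠ u) (hwv : w ≠ v) :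
    (commGraph G).dist u w = (commGraph G).dist v w := by
  have hadj : (commGraph G).Adj u w ↔ (commGraph G).Adj v w := by
    obtain ⟨ug, ub⟩ := u; obtain ⟨vg, vb⟩ := v; obtain ⟨wg, wb⟩ := w
    simp only at hb h1 h2
    subst hb
    cases ub <;> cases wb
    · have hu : ug ≠ wg := fun hh => hwu (by simp [GenDihedral.ext_iff, hh])
      have hv : vg ≠ wg := fun hh => hwv (by simp [GenDihedral.ext_iff, hh])
      rw [adj_ff, adj_ff]
      exact iff_of_true hu hv
    · rw [adj_ft, adj_ft]; exact h1
    · rw [adj_tf, adj_tf]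
    · have hu : ug ≠ wg := fun hh => hwu (by simp [GenDihedral.ext_iff, hh])
      have hv : vg ≠ wg := fun hh => hwv (by simp [GenDihedral.ext_iff, hh])
      rw [adj_tt, adj_tt]
      have hsq := h2 rfl
      constructor
      · rintro ⟨-, hs⟩; exact ⟨hv, hsq ▸ hs⟩
      · rintro ⟨-, hs⟩; exact ⟨hu, hsq.symm ▸ hs⟩
  rw [dist_formula, dist_formula]
  simp only [if_neg (Ne.symm hwu), if_neg (Ne.symm hwv)]
  by_cases ha : (commGraph G).Adj u w
  · rw [if_pos ha, if_pos (hadj.mp ha)]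
  · rw [if_neg ha, if_neg (fun hh => ha (hadj.mpr hh))]

end GenDihedral

/-- `W` is a resolving set of `Γ` if every pair of distinct vertices is distinguished
by its vector of graph distances to the vertices of `W`. -/
def IsResolvingSet {V : Type} (Γ : SimpleGraph V) (W : Set V) : Prop :=
  ∀ u v : V, u ≠ v → ∃ w ∈ W, Γ.dist u w ≠ Γ.dist v w

/-- The metric dimension of `Γ`: the minimum cardinality of a resolving set. -/
noncomputable def metricDim {V : Type} (Γ : SimpleGraph V) : ℕ :=
  sInf {k : ℕ | ∃ W : Finset V, IsResolvingSet Γ ↑W ∧ W.card = k}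

/-- The number `sᵢ` of resolving sets of `Γ` of cardinality `i` (the coefficient of `xⁱ`
in the resolving polynomial `β(Γ, x) = Σᵢ sᵢ xⁱ`). -/
noncomputable def numResolvingSets {V : Type} (Γ : SimpleGraph V) (i : ℕ) : ℕ :=
  Set.ncard {W : Finset V | IsResolvingSet Γ ↑W ∧ W.card = i}

open GenDihedral in
/-- If `z = |{g : g² = e}| ≥ 2`, the metric dimension of the commuting graph of a
non-abelian `D(G)` equals `2n - n/z - 2`, where `n = |G|`. -/
theorem stmt14 {G : Type} [CommGroup G] [Fintype G] [DecidableEq G]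
    (hna : ∃ g : G, g ^ 2 ≠ 1) (n z : ℕ) (hn : n = Fintype.card G)
    (hz : z = (Finset.univ.filter fun g : G => g ^ 2 = 1).card) (hz2 : 2 ≤ z) :
    metricDim (commGraph G) = 2 * n - n / z - 2 := by
  classical
  obtain ⟨g0, hg0⟩ := hna
  set F : Finset G := Finset.univ.filter (fun g : G => rep g = g) with hF
  set k := F.card with hk
  have hnzk : n = k * z := by rw [hn, hz, hk]; exact card_univ_eq
  have hz0 : 0 < z := by omega
  have hnz : n / z = k := by rw [hnzk]; exact Nat.mul_div_cancel _ hz0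
  have hzn : z < n := by
    have h1 : (Finset.univ.filter fun g : G => g ^ 2 = 1).card
        < (Finset.univ : Finset G).card :=
      Finset.card_lt_card (Finset.filter_ssubset.mpr ⟨g0, Finset.mem_univ _, hg0⟩)
    rw [Finset.card_univ, ← hn, ← hz] at h1
    exact h1
  have hk2 : 2 ≤ k := by
    by_contra hlt
    push_neg at hlt
    have hle : n ≤ z := by
      calc n = k * z := hnzk
      _ ≤ 1 * z := Nat.mul_le_mul_right z (by omega)
      _ = z := one_mul z
    omega
  have hcard2n : Fintype.card (GenDihedral G) = 2 * n := by rw [card_gd, hn]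
  have h10 : (1 : G) ≠ g0 := fun hh => hg0 (by rw [← hh, one_pow])
  -- Lower bound
  have lower : ∀ W : Finset (GenDihedral G),
      IsResolvingSet (commGraph G) ↑W → 2 * n - n / z - 2 ≤ W.card := by
    intro W hW
    set S := (Finset.univ : Finset (GenDihedral G)) \ W with hS
    set f : GenDihedral G → Bool × G :=
      fun x => (x.b, if x.b then rep x.g else if x.g ^ 2 = 1 then 1 else g0) with hf
    have hinj : Set.InjOn f ↑S := by
      intro u hu v hv hfe
      by_contra hne
      obtain ⟨w, hwW, hd⟩ := hW u v hne
      have hwu : w ≠ u := by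
        rintro rfl
        exact (Finset.mem_sdiff.mp (Finset.mem_coe.mp hu)).2 hwW
      have hwv : w ≠ v := by
        rintro rfl
        exact (Finset.mem_sdiff.mp (Finset.mem_coe.mp hv)).2 hwW
      have hb : u.b = v.b := congrArg Prod.fst hfe
      have hsnd : (if u.b then rep u.g else if u.g ^ 2 = 1 then 1 else g0)
          = (if v.b then rep v.g else if v.g ^ 2 = 1 then 1 else g0) :=
        congrArg Prod.snd hfe
      refine hd (twin_dist hb ?_ ?_ hwu hwv)
      · cases hub : u.b
        · rw [hub, ← hb, hub] at hsnd
          simp only [Bool.false_eq_true, if_false] at hsnd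
          split_ifs at hsnd with hA hB hB
          · exact iff_of_true hA hB
          · exact absurd hsnd h10
          · exact absurd hsnd.symm h10
          · exact iff_of_false hA hB
        · rw [hub, ← hb, hub] at hsnd
          simp only [if_true] at hsnd
          rw [sq_eq_of_rep hsnd]
      · intro hub
        rw [hub, ← hb, hub] at hsnd
        simp only [if_true] at hsnd
        exact sq_eq_of_rep hsnd
    have himg : S.image f ⊆
        insert (false, (1 : G)) (insert (false, g0) (F.image fun r => (true, r))) := by
      intro p hp
      obtain ⟨x, hx, rfl⟩ := Finset.mem_image.mp hp
      cases hxb : x.b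
      · have hfx : f x = (false, if x.g ^ 2 = 1 then 1 else g0) := by
          simp only [hf]; rw [hxb]; simp
        rw [hfx]
        split_ifs with hX
        · exact Finset.mem_insert_self _ _
        · exact Finset.mem_insert_of_mem (Finset.mem_insert_self _ _)
      · have hfx : f x = (true, rep x.g) := by
          simp only [hf]; rw [hxb]; simp
        rw [hfx]
        refine Finset.mem_insert_of_mem (Finset.mem_insert_of_mem ?_)
        exact Finset.mem_image.mpr ⟨rep x.g,
          Finset.mem_filter.mpr ⟨Finset.mem_univ _, rep_rep _⟩, rfl⟩
    have hScard : S.card ≤ 2 + k := by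
      have h1 : (S.image f).card = S.card := Finset.card_image_of_injOn hinj
      have h2 := Finset.card_le_card himg
      have h3 := Finset.card_insert_le (false, (1 : G))
        (insert (false, g0) (F.image fun r : G => (true, r)))
      have h4 := Finset.card_insert_le (false, g0) (F.image fun r : G => (true, r))
      have h5 := Finset.card_image_le (f := fun r : G => (true, r)) (s := F)
      omega
    have hc1 : W.card ≤ 2 * n := hcard2n ▸ Finset.card_le_univ W
    have hc2 : S.card = 2 * n - W.card := by
      rw [hS, Finset.card_sdiff_of_subset (Finset.subset_univ W), Finset.card_univ, hcard2n]
    rw [hnz]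
    omega
  -- Upper bound data
  have hZ2 : 2 ≤ (Finset.univ.filter fun g : G => g ^ 2 = 1).card := hz ▸ hz2
  obtain ⟨t, ht, ht1⟩ := Finset.exists_mem_ne
    (s := Finset.univ.filter fun g : G => g ^ 2 = 1) (by omega) (1 : G)
  have htsq : t ^ 2 = 1 := (Finset.mem_filter.mp ht).2
  have hnc2 : 2 ≤ (Finset.univ.filter fun g : G => ¬g ^ 2 = 1).card := by
    have h6 := Finset.card_filter_add_card_filter_not
      (s := (Finset.univ : Finset G)) (p := fun g : G => g ^ 2 = 1)
    rw [Finset.card_univ, ← hn, ← hz] at h6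
    have h7 : 2 * z ≤ n := by
      calc 2 * z ≤ k * z := Nat.mul_le_mul_right z hk2
      _ = n := hnzk.symm
    omega
  obtain ⟨h₂, hh2mem, hh2ne⟩ := Finset.exists_mem_ne
    (s := Finset.univ.filter fun g : G => ¬g ^ 2 = 1) (by omega) g0
  have hh2sq : ¬h₂ ^ 2 = 1 := (Finset.mem_filter.mp hh2mem).2
  have hh21 : h₂ ≠ 1 := fun hh => hh2sq (by rw [hh, one_pow])
  set h₁ := rep (1 : G) * t with hh1
  have hreph₁ : rep h₁ = rep (1 : G) := by
    have hsq1 : h₁ ^ 2 = rep (1 : G) ^ 2 := by rw [hh1, mul_pow, htsq, mul_one]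
    rw [rep_eq_of_sq hsq1, rep_rep]
  have hh₁F : rep h₁ ≠ h₁ := by
    rw [hreph₁, hh1]
    intro hh
    exact ht1 (left_eq_mul.mp hh)
  set E : Finset (GenDihedral G) :=
    insert ⟨1, false⟩ (insert ⟨g0, false⟩
      (F.image fun r => (⟨r, true⟩ : GenDihedral G))) with hE
  set W : Finset (GenDihedral G) := Finset.univ \ E with hW
  have hmemim : ∀ x : GenDihedral G,
      x ∈ F.image (fun r => (⟨r, true⟩ : GenDihedral G)) ↔ rep x.g = x.g ∧ x.b = true := by
    intro x
    simp only [Finset.mem_image, hF, Finset.mem_filter, Finset.mem_univ, true_and]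
    constructor
    · rintro ⟨r, hr, rfl⟩; exact ⟨hr, rfl⟩
    · rintro ⟨h1, h2⟩
      exact ⟨x.g, h1, by ext <;> simp [h2]⟩
  have hinj2 : Function.Injective (fun r : G => (⟨r, true⟩ : GenDihedral G)) :=
    fun a b hab => congrArg GenDihedral.g hab
  have e2 : (⟨g0, false⟩ : GenDihedral G)
      ∉ F.image (fun r => (⟨r, true⟩ : GenDihedral G)) := by
    rw [hmemim]
    rintro ⟨-, h⟩
    exact Bool.noConfusion h
  have e1 : (⟨1, false⟩ : GenDihedral G)
      ∉ insert ⟨g0, false⟩ (F.image fun r => (⟨r, true⟩ : GenDihedral G)) := by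
    simp only [Finset.mem_insert, hmemim]
    rintro (h | ⟨-, h⟩)
    · exact h10 (congrArg GenDihedral.g h)
    · exact Bool.noConfusion h
  have hcardE : E.card = 2 + k := by
    rw [hE, Finset.card_insert_of_notMem e1, Finset.card_insert_of_notMem e2,
      Finset.card_image_of_injective _ hinj2]
    omega
  have hcardW : W.card = 2 * n - n / z - 2 := by
    rw [hW, Finset.card_sdiff_of_subset (Finset.subset_univ E), Finset.card_univ, hcard2n,
      hcardE, hnz]
    omega
  have memW : ∀ x : GenDihedral G, x ∉ E → x ∈ (↑W : Set (GenDihedral G)) := by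
    intro x hx
    exact Finset.mem_coe.mpr (Finset.mem_sdiff.mpr ⟨Finset.mem_univ x, hx⟩)
  have hWt : ∀ gg : G, rep gg ≠ gg →
      (⟨gg, true⟩ : GenDihedral G) ∈ (↑W : Set (GenDihedral G)) := by
    intro gg hgg
    apply memW
    rw [hE]
    simp only [Finset.mem_insert, hmemim]
    rintro (h | h | ⟨h, -⟩)
    · exact Bool.noConfusion (congrArg GenDihedral.b h)
    · exact Bool.noConfusion (congrArg GenDihedral.b h)
    · exact hgg h
  have hWh₂ : (⟨h₂, false⟩ : GenDihedral G) ∈ (↑W : Set (GenDihedral G)) := by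
    apply memW
    rw [hE]
    simp only [Finset.mem_insert, hmemim]
    rintro (h | h | ⟨-, h⟩)
    · exact hh21 (congrArg GenDihedral.g h)
    · exact hh2ne (congrArg GenDihedral.g h)
    · exact Bool.noConfusion h
  have hWh₁ : (⟨h₁, true⟩ : GenDihedral G) ∈ (↑W : Set (GenDihedral G)) := hWt h₁ hh₁F
  have d2 : ∀ {a b : GenDihedral G}, a ≠ b → ¬(commGraph G).Adj a b →
      (commGraph G).dist a b = 2 := by
    intro a b hab hnadj
    rw [dist_formula, if_neg hab, if_neg hnadj]
  have caseA : (commGraph G).dist ⟨1, false⟩ ⟨h₁, true⟩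
      ≠ (commGraph G).dist ⟨g0, false⟩ ⟨h₁, true⟩ := by
    rw [SimpleGraph.dist_eq_one_iff_adj.mpr (adj_ft.mpr (one_pow 2)),
      d2 (fun hh => Bool.noConfusion (congrArg GenDihedral.b hh))
        (fun hh => hg0 (adj_ft.mp hh))]
    omega
  have caseBC : ∀ g1 : G, g1 ≠ h₂ → ∀ r : G,
      (commGraph G).dist ⟨g1, false⟩ ⟨h₂, false⟩
        ≠ (commGraph G).dist ⟨r, true⟩ ⟨h₂, false⟩ := by
    intro g1 hg1 r
    rw [SimpleGraph.dist_eq_one_iff_adj.mpr (adj_ff.mpr hg1),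
      d2 (fun hh => Bool.noConfusion (congrArg GenDihedral.b hh))
        (fun hh => hh2sq (adj_tf.mp hh))]
    omega
  have caseD : ∀ r s : G, rep r = r → rep s = s → r ≠ s →
      ∃ w ∈ (↑W : Set (GenDihedral G)),
        (commGraph G).dist ⟨r, true⟩ w ≠ (commGraph G).dist ⟨s, true⟩ w := by
    intro r s hr hs hrs
    have hsqrt : (r * t) ^ 2 = r ^ 2 := by rw [mul_pow, htsq, mul_one]
    have hrepr : rep (r * t) = r := by rw [rep_eq_of_sq hsqrt, hr]
    have hrne : r ≠ r * t := fun hh => ht1 (left_eq_mul.mp hh)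
    have hwmem : (⟨r * t, true⟩ : GenDihedral G) ∈ (↑W : Set (GenDihedral G)) :=
      hWt (r * t) (by rw [hrepr]; exact hrne)
    have hsr2 : s ^ 2 ≠ r ^ 2 := fun hh => hrs (by rw [← hr, ← hs, rep_eq_of_sq hh.symm])
    have hvw : (⟨s, true⟩ : GenDihedral G) ≠ ⟨r * t, true⟩ := by
      intro hh
      have hsg : s = r * t := congrArg GenDihedral.g hh
      exact hsr2 (by rw [hsg, hsqrt])
    refine ⟨⟨r * t, true⟩, hwmem, ?_⟩
    rw [SimpleGraph.dist_eq_one_iff_adj.mpr (adj_tt.mpr ⟨hrne, hsqrt.symm⟩),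
      d2 hvw (fun hh => hsr2 ((adj_tt.mp hh).2.trans hsqrt))]
    omega
  have hres : IsResolvingSet (commGraph G) ↑W := by
    intro u v huv
    by_cases huW : u ∈ W
    · refine ⟨u, Finset.mem_coe.mpr huW, ?_⟩
      rw [SimpleGraph.dist_self, dist_formula, if_neg (Ne.symm huv)]
      split_ifs <;> omega
    by_cases hvW : v ∈ W
    · refine ⟨v, Finset.mem_coe.mpr hvW, ?_⟩
      rw [SimpleGraph.dist_self, dist_formula, if_neg huv]
      split_ifs <;> omega
    have huE : u ∈ E := by
      by_contra hx
      exact huW (Finset.mem_sdiff.mpr ⟨Finset.mem_univ _, hx⟩)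
    have hvE : v ∈ E := by
      by_contra hx
      exact hvW (Finset.mem_sdiff.mpr ⟨Finset.mem_univ _, hx⟩)
    rw [hE] at huE hvE
    simp only [Finset.mem_insert, hmemim] at huE hvE
    rcases huE with rfl | rfl | ⟨hur, hub⟩ <;>
      rcases hvE with rfl | rfl | ⟨hvr, hvb⟩
    · exact absurd rfl huv
    · exact ⟨⟨h₁, true⟩, hWh₁, caseA⟩
    · have hvform : v = ⟨v.g, true⟩ := by ext <;> simp [hvb]
      refine ⟨⟨h₂, false⟩, hWh₂, ?_⟩
      rw [hvform]
      exact caseBC 1 (Ne.symm hh21) v.g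
    · exact ⟨⟨h₁, true⟩, hWh₁, caseA.symm⟩
    · exact absurd rfl huv
    · have hvform : v = ⟨v.g, true⟩ := by ext <;> simp [hvb]
      refine ⟨⟨h₂, false⟩, hWh₂, ?_⟩
      rw [hvform]
      exact caseBC g0 (Ne.symm hh2ne) v.g
    · have huform : u = ⟨u.g, true⟩ := by ext <;> simp [hub]
      refine ⟨⟨h₂, false⟩, hWh₂, ?_⟩
      rw [huform]
      exact (caseBC 1 (Ne.symm hh21) u.g).symm
    · have huform : u = ⟨u.g, true⟩ := by ext <;> simp [hub]
      refine ⟨⟨h₂, false⟩, hWh₂, ?_⟩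
      rw [huform]
      exact (caseBC g0 (Ne.symm hh2ne) u.g).symm
    · have huform : u = ⟨u.g, true⟩ := by ext <;> simp [hub]
      have hvform : v = ⟨v.g, true⟩ := by ext <;> simp [hvb]
      have hne : u.g ≠ v.g := fun hh => huv (by rw [huform, hvform, hh])
      rw [huform, hvform]
      exact caseD u.g v.g hur hvr hne
  apply le_antisymm
  · exact Nat.sInf_le ⟨W, hres, hcardW⟩
  · exact le_csInf ⟨_, W, hres, hcardW⟩ (by rintro k' ⟨W', hW', rfl⟩; exact lower W' hW')
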